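/- Let k be an algebraically closed field, K a field extension of k, and R a k-algebra. Then every idempotent element e of R ⊗_k K is of the form f ⊗ 1 for some idempotent f ∈ R. -/

import Mathlib

open TensorProduct

set_option maxHeartbeats 1000000
set_option synthInstance.maxHeartbeats 400000

lemma idem_span_finite {k R : Type} [Field k] [CommRing R] [Algebra k R]
    (s : Finset R) :
    {x : R | IsIdempotentElem x ∧ x ∈ Submodule.span k (s : Set R)}.Finite := by
  set E := {x : R | IsIdempotentElem x ∧ x ∈ Submodule.span k (s : Set R)} with hE
  obtain ⟨b, hbE, hspan, hbli⟩ := exists_linearIndependent k E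
  have hEspan : E ⊆ ↑(Submodule.span k (s : Set R)) := fun x hx => hx.2
  have hbfin : b.Finite := by
    obtain ⟨h, -⟩ := exists_finite_card_le_of_finite_of_linearIndependent_of_span
      s.finite_toSet hbli ((hbE.trans hEspan) : b ⊆ ↑(Submodule.span k (s : Set R)))
    exact h
  classical
  set t : Finset R := hbfin.toFinset with ht
  have htE : ∀ x ∈ t, IsIdempotentElem x := by
    intro x hx
    exact (hbE (hbfin.mem_toFinset.mp hx)).1
  set p : Finset R → R := fun S => (∏ x ∈ S, x) * ∏ x ∈ t \ S, (1 - x) with hp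
  have hsum : ∑ S ∈ t.powerset, p S = 1 := by
    have := Finset.prod_add (fun x : R => x) (fun x : R => 1 - x) t
    simp only [add_sub_cancel, Finset.prod_const_one] at this
    rw [← this]
  have hxp : ∀ x ∈ t, ∀ S ∈ t.powerset, x * p S = if x ∈ S then p S else 0 := by
    intro x hx S hS
    rw [Finset.mem_powerset] at hS
    by_cases hxS : x ∈ S
    · rw [if_pos hxS]
      show x * ((∏ y ∈ S, y) * ∏ y ∈ t \ S, (1 - y)) = (∏ y ∈ S, y) * ∏ y ∈ t \ S, (1 - y)
      have h1 : ∏ y ∈ S, y = x * ∏ y ∈ S.erase x, y := (Finset.mul_prod_erase S _ hxS).symm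
      rw [h1, ← mul_assoc, ← mul_assoc, (htE x hx)]
    · rw [if_neg hxS]
      show x * ((∏ y ∈ S, y) * ∏ y ∈ t \ S, (1 - y)) = 0
      have hxts : x ∈ t \ S := Finset.mem_sdiff.mpr ⟨hx, hxS⟩
      have h1 : ∏ y ∈ t \ S, (1 - y) = (1 - x) * ∏ y ∈ (t \ S).erase x, (1 - y) :=
        (Finset.mul_prod_erase _ _ hxts).symm
      have hx0 : x * (1 - x) = 0 := by
        have h2 := htE x hx
        rw [IsIdempotentElem] at h2
        rw [mul_sub, mul_one, h2, sub_self]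
      rw [h1]
      calc x * ((∏ y ∈ S, y) * ((1 - x) * ∏ y ∈ (t \ S).erase x, (1 - y)))
          = (x * (1 - x)) * ((∏ y ∈ S, y) * ∏ y ∈ (t \ S).erase x, (1 - y)) := by ring
        _ = 0 := by rw [hx0, zero_mul]
  have key : ∀ y ∈ E, ∃ T : Finset (Finset R), T ⊆ t.powerset ∧ y = ∑ S ∈ T, p S := by
    intro y hy
    have hyt : y ∈ Submodule.span k (t : Set R) := by
      rw [ht, Set.Finite.coe_toFinset, hspan]; exact Submodule.subset_span hy
    obtain ⟨f, -, hf⟩ := Submodule.mem_span_finset.mp hyt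
    have hyp : ∀ S ∈ t.powerset, y * p S = (∑ x ∈ S, f x) • p S := by
      intro S hS
      have hSt := Finset.mem_powerset.mp hS
      calc y * p S = (∑ x ∈ t, f x • x) * p S := by rw [hf]
        _ = ∑ x ∈ t, f x • (x * p S) := by rw [Finset.sum_mul]; simp [smul_mul_assoc]
        _ = ∑ x ∈ S, f x • p S := by
            rw [← Finset.sum_subset hSt]
            · exact Finset.sum_congr rfl fun x hx => by
                rw [hxp x (hSt hx) S hS, if_pos hx]
            · intro x hx hxS
              rw [hxp x hx S hS, if_neg hxS, smul_zero]
        _ = (∑ x ∈ S, f x) • p S := by rw [Finset.sum_smul]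
    have hyp2 : ∀ S ∈ t.powerset, y * p S = 0 ∨ y * p S = p S := by
      intro S hS
      set c := ∑ x ∈ S, f x with hc
      have h1 : y * (y * p S) = c • (y * p S) := by
        rw [hyp S hS, mul_smul_comm, hyp S hS]
      have h2 : y * (y * p S) = y * p S := by
        rw [← mul_assoc, hy.1]
      have h4 : c • (c • p S) = c • p S := by
        have h5 := h1.symm.trans h2
        rwa [hyp S hS] at h5
      have h3 : (c * c - c) • p S = 0 := by
        rw [sub_smul, mul_smul, h4, sub_self]
      rcases smul_eq_zero.mp h3 with h | h
      · have h6 : c * (c - 1) = 0 := by rw [mul_sub, mul_one]; exact h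
        rcases mul_eq_zero.mp h6 with h' | h'
        · left; rw [hyp S hS, ← hc, h', zero_smul]
        · right; rw [hyp S hS, ← hc, sub_eq_zero.mp h', one_smul]
      · left; rw [hyp S hS, ← hc, h, smul_zero]
    refine ⟨t.powerset.filter (fun S => y * p S = p S ∧ p S ≠ 0), Finset.filter_subset _ _, ?_⟩
    calc y = y * ∑ S ∈ t.powerset, p S := by rw [hsum, mul_one]
      _ = ∑ S ∈ t.powerset, y * p S := Finset.mul_sum _ _ _
      _ = ∑ S ∈ t.powerset.filter (fun S => y * p S = p S ∧ p S ≠ 0), y * p S := by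
          rw [Finset.sum_filter_of_ne]
          intro S hS hne
          rcases hyp2 S hS with h | h
          · exact absurd h hne
          · exact ⟨h, fun h0 => hne (by rw [h, h0])⟩
      _ = ∑ S ∈ t.powerset.filter (fun S => y * p S = p S ∧ p S ≠ 0), p S :=
          Finset.sum_congr rfl fun S hS => (Finset.mem_filter.mp hS).2.1
  have himg : E ⊆ (fun T : Finset (Finset R) => ∑ S ∈ T, p S) '' ↑t.powerset.powerset := by
    intro y hy
    obtain ⟨T, hT, hyT⟩ := key y hy
    exact ⟨T, Finset.mem_coe.mpr (Finset.mem_powerset.mpr hT), hyT.symm⟩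
  exact Set.Finite.subset (Set.Finite.image _ (t.powerset.powerset).finite_toSet) himg

lemma prod_ideal_eq_bot {ι A : Type*} [CommRing A] [IsDomain A] {s : Finset ι} {I : ι → Ideal A}
    (h : ∏ i ∈ s, I i = ⊥) : ∃ i ∈ s, I i = ⊥ := by
  classical
  induction s using Finset.induction_on with
  | empty =>
      rw [Finset.prod_empty, Ideal.one_eq_top] at h
      have : (1 : A) ∈ (⊥ : Ideal A) := h ▸ Submodule.mem_top
      exact absurd (Ideal.mem_bot.mp this) one_ne_zero
  | insert _ _ hx ih =>
      rw [Finset.prod_insert hx] at h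
      rcases Ideal.mul_eq_bot.mp h with h' | h'
      · exact ⟨_, Finset.mem_insert_self _ _, h'⟩
      · obtain ⟨i, hi, hib⟩ := ih h'
        exact ⟨i, Finset.mem_insert_of_mem hi, hib⟩


/-- If `k` is algebraically closed, `K|k` a field extension and `R` a `k`-algebra,
then every idempotent of `R ⊗_k K` is of the form `f ⊗ 1` with `f ∈ R` idempotent. -/
theorem strongly_etale_stmt15
    (k K R : Type) [Field k] [IsAlgClosed k] [Field K] [Algebra k K]
    [CommRing R] [Algebra k R]
    (e : R ⊗[k] K) (he : IsIdempotentElem e) :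
    ∃ f : R, IsIdempotentElem f ∧ e = f ⊗ₜ[k] (1 : K) := by
  classical
  obtain ⟨Sfin, hSfin⟩ := TensorProduct.exists_finset e
  set A : Subalgebra k K := Algebra.adjoin k (↑(Sfin.image Prod.snd) : Set K) with hA
  haveI hFT : Algebra.FiniteType k A :=
    (Subalgebra.fg_iff_finiteType A).mp (Subalgebra.fg_adjoin_finset _)
  haveI : IsJacobsonRing A := isJacobsonRing_of_finiteType (A := k)
  set ι : R ⊗[k] A →ₐ[k] R ⊗[k] K := Algebra.TensorProduct.map (AlgHom.id k R) A.val with hι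
  -- injectivity of ι
  obtain ⟨π, hπ⟩ := A.val.toLinearMap.exists_leftInverse_of_injective
    (LinearMap.ker_eq_bot.mpr Subtype.val_injective)
  have hcomp : ∀ z : R ⊗[k] A, LinearMap.lTensor R π (ι z) = z := by
    intro z
    induction z using TensorProduct.induction_on with
    | zero => simp
    | tmul r a =>
        have ha : π (A.val a) = a := LinearMap.ext_iff.mp hπ a
        simp only [hι, Algebra.TensorProduct.map_tmul, AlgHom.coe_id, id_eq,
          LinearMap.lTensor_tmul]
        exact congrArg (r ⊗ₜ[k] ·) ha
    | add x y hx hy => rw [map_add, map_add, hx, hy]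
  have hinj : Function.Injective ι := fun x y hxy => by
    rw [← hcomp x, ← hcomp y, hxy]
  -- e' in R ⊗ A
  have hmem : ∀ i ∈ Sfin, i.2 ∈ A := fun i hi =>
    Algebra.subset_adjoin (Finset.mem_coe.mpr (Finset.mem_image_of_mem Prod.snd hi))
  set e' : R ⊗[k] A := ∑ i ∈ Sfin.attach, i.1.1 ⊗ₜ[k] (⟨i.1.2, hmem i.1 i.2⟩ : A) with he'
  have hιe' : ι e' = e := by
    rw [he', map_sum, hSfin, ← Finset.sum_attach Sfin (fun i => i.1 ⊗ₜ[k] i.2)]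
    exact Finset.sum_congr rfl fun i _ => by
      simp [hι, Algebra.TensorProduct.map_tmul]
  have hide' : IsIdempotentElem e' := hinj (by
    rw [map_mul, hιe', he])

  -- basis of R and coordinates of e'
  set B := Module.Basis.ofVectorSpace k R with hB
  set cb : Module.Basis.ofVectorSpaceIndex k R → (R ⊗[k] A →ₗ[k] A) := fun b =>
    (TensorProduct.lid k A).toLinearMap ∘ₗ LinearMap.rTensor A (B.coord b) with hcb
  have hcbtmul : ∀ b (r : R) (a : A), cb b (r ⊗ₜ[k] a) = B.repr r b • a := by
    intro b r a
    simp [hcb, TensorProduct.lid_tmul, Module.Basis.coord_apply]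
  set β : Module.Basis.ofVectorSpaceIndex k R → A := fun b => cb b e' with hβ
  obtain ⟨S2, hS2⟩ := TensorProduct.exists_finset e'
  set T : Finset (Module.Basis.ofVectorSpaceIndex k R) :=
    S2.biUnion (fun i => (B.repr i.1).support) with hT
  have hβγ : ∀ b, β b = ∑ i ∈ S2, B.repr i.1 b • i.2 := by
    intro b
    show cb b e' = _
    rw [hS2, map_sum]
    exact Finset.sum_congr rfl fun i _ => hcbtmul b i.1 i.2
  have hβ0 : ∀ b ∉ T, β b = 0 := by
    intro b hb
    rw [hβγ]
    refine Finset.sum_eq_zero fun i hi => ?_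
    have : b ∉ (B.repr i.1).support := fun hmem => hb (Finset.mem_biUnion.mpr ⟨i, hi, hmem⟩)
    rw [Finsupp.notMem_support_iff.mp this, zero_smul]
  have hrep : e' = ∑ b ∈ T, B b ⊗ₜ[k] β b := by
    have h1 : ∀ i ∈ S2, (i.1 : R) = ∑ b ∈ T, B.repr i.1 b • B b := by
      intro i hi
      have hsupp : (B.repr i.1).support ⊆ T := fun b hb => Finset.mem_biUnion.mpr ⟨i, hi, hb⟩
      have h2 := B.linearCombination_repr i.1
      rw [Finsupp.linearCombination_apply, Finsupp.sum] at h2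
      calc (i.1 : R) = ∑ b ∈ (B.repr i.1).support, B.repr i.1 b • B b := h2.symm
        _ = ∑ b ∈ T, B.repr i.1 b • B b := Finset.sum_subset hsupp fun b _ hb => by
            rw [Finsupp.notMem_support_iff.mp hb, zero_smul]
    calc e' = ∑ i ∈ S2, (i.1 : R) ⊗ₜ[k] i.2 := hS2
      _ = ∑ i ∈ S2, ∑ b ∈ T, (B.repr i.1 b • B b) ⊗ₜ[k] i.2 := by
          refine Finset.sum_congr rfl fun i hi => ?_
          rw [← TensorProduct.sum_tmul, ← h1 i hi]
      _ = ∑ b ∈ T, ∑ i ∈ S2, B b ⊗ₜ[k] (B.repr i.1 b • i.2) := by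
          rw [Finset.sum_comm]
          refine Finset.sum_congr rfl fun b _ => Finset.sum_congr rfl fun i _ => ?_
          rw [TensorProduct.smul_tmul, TensorProduct.tmul_smul]
      _ = ∑ b ∈ T, B b ⊗ₜ[k] β b := by
          refine Finset.sum_congr rfl fun b _ => ?_
          rw [← TensorProduct.tmul_sum, ← hβγ]

  -- evaluation maps
  set Φ : (A →ₐ[k] k) → (R ⊗[k] A →ₐ[k] R) := fun φ =>
    Algebra.TensorProduct.lift (AlgHom.id k R) ((Algebra.ofId k R).comp φ)
      (fun x y => Commute.all _ _) with hΦdef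
  have hΦ : ∀ φ, Φ φ e' = ∑ b ∈ T, φ (β b) • B b := by
    intro φ
    show Algebra.TensorProduct.lift (AlgHom.id k R) ((Algebra.ofId k R).comp φ)
      (fun x y => Commute.all _ _) e' = _
    rw [hrep, map_sum]
    refine Finset.sum_congr rfl fun b _ => ?_
    rw [Algebra.TensorProduct.lift_tmul]
    simp only [AlgHom.coe_id, id_eq, AlgHom.comp_apply, Algebra.ofId_apply]
    rw [Algebra.smul_def, mul_comm]
  have hidem : ∀ φ, IsIdempotentElem (Φ φ e') := fun φ => by
    show Φ φ e' * Φ φ e' = Φ φ e'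
    rw [← map_mul, hide']
  have hrepr : ∀ φ b', B.repr (Φ φ e') b' = φ (β b') := by
    intro φ b'
    rw [hΦ, map_sum]
    rw [Finset.sum_apply']
    have hterm : ∀ b ∈ T, (B.repr (φ (β b) • B b)) b' = if b = b' then φ (β b) else 0 := by
      intro b _
      rw [map_smul, B.repr_self, Finsupp.smul_apply, Finsupp.single_apply]
      split <;> simp
    rw [Finset.sum_congr rfl hterm, Finset.sum_ite_eq' T b' (fun b => φ (β b))]
    by_cases hb' : b' ∈ T
    · rw [if_pos hb']
    · rw [if_neg hb', hβ0 b' hb', map_zero]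
  have hFfin : (Set.range fun φ : A →ₐ[k] k => Φ φ e').Finite := by
    refine Set.Finite.subset (idem_span_finite (k := k) (T.image fun b => B b)) ?_
    rintro - ⟨φ, rfl⟩
    refine ⟨hidem φ, ?_⟩
    show (Φ φ) e' ∈ _
    rw [hΦ]
    exact Submodule.sum_mem _ fun b hb => Submodule.smul_mem _ _
      (Submodule.subset_span (Finset.mem_coe.mpr (Finset.mem_image_of_mem _ hb)))
  set Ffin := hFfin.toFinset with hFfinDef
  set I : R → Ideal A := fun f =>
    Ideal.span (Set.range fun b => β b - algebraMap k A (B.repr f b)) with hI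
  have hImax : ∀ m : Ideal A, m.IsMaximal → ∃ f ∈ Ffin, I f ≤ m := by
    intro m hm
    letI := Ideal.Quotient.field m
    haveI : Algebra.FiniteType k (A ⧸ m) :=
      hFT.of_surjective (Ideal.Quotient.mkₐ k m) (Ideal.Quotient.mkₐ_surjective k m)
    haveI : Module.Finite k (A ⧸ m) := finite_of_finite_type_of_isJacobsonRing k (A ⧸ m)
    haveI : Algebra.IsIntegral k (A ⧸ m) := Algebra.IsIntegral.of_finite k _
    have hsurj : Function.Surjective (algebraMap k (A ⧸ m)) :=
      IsAlgClosed.algebraMap_bijective_of_isIntegral.2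
    set ε : k ≃ₐ[k] (A ⧸ m) := AlgEquiv.ofBijective (Algebra.ofId k (A ⧸ m))
      ⟨RingHom.injective _, hsurj⟩ with hε
    set φ : A →ₐ[k] k := (ε.symm : (A ⧸ m) →ₐ[k] k).comp (Ideal.Quotient.mkₐ k m) with hφ
    refine ⟨Φ φ e', hFfin.mem_toFinset.mpr ⟨φ, rfl⟩, ?_⟩
    show Ideal.span _ ≤ m
    refine Ideal.span_le.mpr ?_
    rintro - ⟨b, rfl⟩
    have h0 : φ (β b - algebraMap k A (B.repr (Φ φ e') b)) = 0 := by
      rw [map_sub, AlgHom.commutes, hrepr φ b]; simp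
    have h1 : ε (φ (β b - algebraMap k A (B.repr (Φ φ e') b)))
        = Ideal.Quotient.mk m (β b - algebraMap k A (B.repr (Φ φ e') b)) := by
      simp only [hφ, AlgHom.comp_apply, AlgEquiv.coe_algHom, Ideal.Quotient.mkₐ_eq_mk]
      exact ε.apply_symm_apply _
    have hx : Ideal.Quotient.mk m (β b - algebraMap k A (B.repr (Φ φ e') b)) = 0 := by
      rw [← h1, h0, map_zero]
    exact Ideal.Quotient.eq_zero_iff_mem.mp hx
  have hprod : ∏ f ∈ Ffin, I f = ⊥ := by
    have hle : ∏ f ∈ Ffin, I f ≤ Ideal.jacobson ⊥ := by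
      rw [Ideal.jacobson]
      refine le_sInf ?_
      rintro J ⟨-, hJ⟩
      obtain ⟨f, hf, hfJ⟩ := hImax J hJ
      exact le_trans (le_trans Ideal.prod_le_inf (Finset.inf_le hf)) hfJ
    rw [← Ideal.radical_eq_jacobson, Ideal.radical_bot_of_noZeroDivisors] at hle
    exact le_bot_iff.mp hle
  obtain ⟨f, hfF, hfbot⟩ := prod_ideal_eq_bot hprod
  obtain ⟨φ₀, hφ₀⟩ := hFfin.mem_toFinset.mp hfF
  have hgen : ∀ b, β b = algebraMap k A (B.repr f b) := by
    intro b
    have hb0 : β b - algebraMap k A (B.repr f b) = 0 :=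
      Ideal.span_eq_bot.mp hfbot _ ⟨b, rfl⟩
    exact sub_eq_zero.mp hb0
  have hdT : ∀ b ∉ T, B.repr f b = 0 := by
    intro b hb
    rw [← hφ₀, hrepr φ₀ b, hβ0 b hb, map_zero]
  have hfsum : f = ∑ b ∈ T, B.repr f b • B b := by
    have h2 := B.linearCombination_repr f
    rw [Finsupp.linearCombination_apply, Finsupp.sum] at h2
    have hsupp : (B.repr f).support ⊆ T := fun b hb => by
      by_contra hbT; exact (Finsupp.mem_support_iff.mp hb) (hdT b hbT)
    calc f = ∑ b ∈ (B.repr f).support, B.repr f b • B b := h2.symm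
      _ = ∑ b ∈ T, B.repr f b • B b := Finset.sum_subset hsupp fun b _ hb => by
          rw [Finsupp.notMem_support_iff.mp hb, zero_smul]
  have he'f : e' = f ⊗ₜ[k] (1 : A) := by
    rw [hrep]
    calc ∑ b ∈ T, B b ⊗ₜ[k] β b
        = ∑ b ∈ T, (B.repr f b • B b) ⊗ₜ[k] (1 : A) := by
          refine Finset.sum_congr rfl fun b _ => ?_
          rw [hgen b, Algebra.algebraMap_eq_smul_one, TensorProduct.tmul_smul,
            TensorProduct.smul_tmul']
      _ = (∑ b ∈ T, B.repr f b • B b) ⊗ₜ[k] (1 : A) := (TensorProduct.sum_tmul _ _ _).symm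
      _ = f ⊗ₜ[k] (1 : A) := by rw [← hfsum]
  refine ⟨f, ?_, ?_⟩
  · rw [← hφ₀]; exact hidem φ₀
  · rw [← hιe', he'f]
    show Algebra.TensorProduct.map (AlgHom.id k R) A.val (f ⊗ₜ[k] (1 : A)) = _
    rw [Algebra.TensorProduct.map_tmul]
    simp
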